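/- Let s₂ ≥ 1 be an integer and e₀ ∈ {2, 3}. Let Σ = Σ₂ ⊔ {z} where Σ₂ has cardinality s₂, and define e : Σ → ℤ by e ≡ 1 on Σ₂ and e(z) = e₀. Then G(Σ, e) is cyclic of order e₀·s₂ + 1, generated by Ψ_z; for any 𝔰 ∈ Σ₂ one has Ψ_𝔰 = e₀·Ψ_z and Ψ_z = −s₂·Ψ_𝔰, so that G(Σ, e) is also generated by Ψ_𝔰. Moreover, every bijection τ : Σ → Σ satisfying e ∘ τ = e induces the identity automorphism of G(Σ, e) (the homomorphism determined by Ψ_s ↦ Ψ_{τ(s)} is the identity). -/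

import Mathlib

/-- The subgroup of relations: `e s • ψ s - e t • ψ t` for all `s t`, together with
`∑ s, ψ s`. -/
noncomputable def relSub {S : Type*} [Fintype S] (e : S → ℤ) : AddSubgroup (S →₀ ℤ) :=
  AddSubgroup.closure
    ({x | ∃ s t : S, x = Finsupp.single s (e s) - Finsupp.single t (e t)} ∪
      {∑ s : S, Finsupp.single s 1})

/-- `G(Σ, e)`: the quotient of the free abelian group on `Σ` by the relations. -/
abbrev CompGrp {S : Type*} [Fintype S] (e : S → ℤ) : Type _ :=
  (S →₀ ℤ) ⧸ relSub e

/-- `Ψ s`: the image of the basis element `ψ s` in `G(Σ, e)`. -/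
noncomputable def Psi {S : Type*} [Fintype S] (e : S → ℤ) (s : S) : CompGrp e :=
  QuotientAddGroup.mk (Finsupp.single s 1)

/-- `Σ = Σ₂ ⊔ {z}` with `#Σ₂ = s₂ ≥ 1`, `e ≡ 1` on `Σ₂`, `e z = e₀ ∈ {2,3}`.
Then `G(Σ, e)` is cyclic of order `e₀·s₂ + 1` generated by `Ψ z`; for `𝔰 ∈ Σ₂`,
`Ψ 𝔰 = e₀ • Ψ z` and `Ψ z = -(s₂ • Ψ 𝔰)`, so `Ψ 𝔰` also generates; and any bijection
`τ` with `e ∘ τ = e` induces the identity on `G(Σ, e)`. -/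
theorem stmt1 (s₂ e₀ : ℕ) (hs : 1 ≤ s₂) (he : e₀ = 2 ∨ e₀ = 3) :
    ∀ e : (Fin s₂ ⊕ Unit) → ℤ, e = Sum.elim (fun _ => 1) (fun _ => (e₀ : ℤ)) →
    ∀ z : Fin s₂ ⊕ Unit, z = Sum.inr () →
    Nat.card (CompGrp e) = e₀ * s₂ + 1 ∧
    AddSubgroup.zmultiples (Psi e z) = ⊤ ∧
    addOrderOf (Psi e z) = e₀ * s₂ + 1 ∧
    (∀ 𝔰 : Fin s₂,
      Psi e (Sum.inl 𝔰) = e₀ • Psi e z ∧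
      Psi e z = -(s₂ • Psi e (Sum.inl 𝔰)) ∧
      AddSubgroup.zmultiples (Psi e (Sum.inl 𝔰)) = ⊤) ∧
    (∀ τ : (Fin s₂ ⊕ Unit) ≃ (Fin s₂ ⊕ Unit), e ∘ τ = e →
      ∀ T : CompGrp e →+ CompGrp e,
        (∀ s, T (Psi e s) = Psi e (τ s)) → T = AddMonoidHom.id (CompGrp e)) := by
  intro e he' z hz
  subst he' hz
  set S := Fin s₂ ⊕ Unit with hS
  set e : S → ℤ := Sum.elim (fun _ => 1) (fun _ => (e₀ : ℤ)) with hedef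
  set n := e₀ * s₂ + 1 with hn
  haveI : NeZero n := ⟨by omega⟩
  set z : S := Sum.inr () with hzdef
  -- the projection
  set π : (S →₀ ℤ) →+ CompGrp e := QuotientAddGroup.mk' (relSub e) with hπ
  have hPsi : ∀ s : S, Psi e s = π (Finsupp.single s 1) := fun s => rfl
  -- key relation
  have key : ∀ i : Fin s₂, Psi e (Sum.inl i) = e₀ • Psi e z := by
    intro i
    have h1 : (e₀ : ℕ) • Psi e z = π ((e₀ : ℕ) • Finsupp.single z 1) := by
      rw [map_nsmul]; rfl
    rw [hPsi, h1, QuotientAddGroup.mk'_eq_mk']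
    refine ⟨Finsupp.single z (e₀ : ℤ) - Finsupp.single (Sum.inl i) 1, ?_, ?_⟩
    · apply AddSubgroup.subset_closure
      left
      refine ⟨z, Sum.inl i, ?_⟩
      simp [hedef, hzdef]
    · simp [Finsupp.smul_single]
  -- n • Psi z = 0
  have hsum0 : π (∑ s : S, Finsupp.single s 1) = 0 := by
    rw [hπ, QuotientAddGroup.mk'_apply, QuotientAddGroup.eq_zero_iff]
    exact AddSubgroup.subset_closure (Or.inr rfl)
  have hnz : n • Psi e z = 0 := by
    have h2 : π (∑ s : S, Finsupp.single s 1) =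
        (∑ i : Fin s₂, Psi e (Sum.inl i)) + Psi e z := by
      rw [map_sum, Fintype.sum_sum_type]
      simp [hPsi]; rfl
    rw [h2] at hsum0
    have h3 : (∑ i : Fin s₂, Psi e (Sum.inl i)) = (e₀ * s₂) • Psi e z := by
      calc (∑ i : Fin s₂, Psi e (Sum.inl i)) = ∑ _i : Fin s₂, e₀ • Psi e z := by
            exact Finset.sum_congr rfl fun i _ => key i
        _ = s₂ • (e₀ • Psi e z) := by
            rw [Finset.sum_const, Finset.card_univ, Fintype.card_fin]
        _ = (e₀ * s₂) • Psi e z := by rw [← mul_nsmul', mul_comm]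
    rw [h3] at hsum0
    rw [hn, succ_nsmul]
    exact hsum0
  -- generation
  have hgen : ∀ x : CompGrp e, x ∈ AddSubgroup.zmultiples (Psi e z) := by
    have hmem : ∀ s : S, Psi e s ∈ AddSubgroup.zmultiples (Psi e z) := by
      intro s
      rcases s with i | u
      · rw [key i]
        exact AddSubgroup.nsmul_mem _ (AddSubgroup.mem_zmultiples _) e₀
      · cases u; exact AddSubgroup.mem_zmultiples _
    intro x
    obtain ⟨a, rfl⟩ := QuotientAddGroup.mk'_surjective (relSub e) x
    induction a using Finsupp.induction_linear with
    | zero => simp [map_zero]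
    | add f g hf hg => rw [map_add]; exact AddSubgroup.add_mem _ hf hg
    | single s m =>
        have : Finsupp.single s m = m • Finsupp.single s (1 : ℤ) := by
          simp [Finsupp.smul_single]
        rw [this, map_zsmul]
        exact AddSubgroup.zsmul_mem _ (hmem s) m
  have htop : AddSubgroup.zmultiples (Psi e z) = ⊤ := by
    rw [AddSubgroup.eq_top_iff']; exact hgen
  -- the character to ZMod n
  set v : S → ZMod n := Sum.elim (fun _ => (e₀ : ZMod n)) (fun _ => 1) with hv
  set χ : (S →₀ ℤ) →+ ZMod n := Finsupp.liftAddHom (fun s => zmultiplesHom _ (v s)) with hχ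
  have hχsingle : ∀ (s : S) (m : ℤ), χ (Finsupp.single s m) = m • v s := by
    intro s m; rw [hχ, Finsupp.liftAddHom_apply_single]; rfl
  have hvs : ∀ s : S, e s • v s = (e₀ : ZMod n) := by
    intro s
    rcases s with i | u
    · simp [hedef, hv]
    · simp [hedef, hv]
  have hker : ∀ x ∈ relSub e, χ x = 0 := by
    intro x hx
    have : relSub e ≤ χ.ker := by
      rw [relSub]
      rw [AddSubgroup.closure_le]
      rintro y (⟨s, t, rfl⟩ | rfl)
      · rw [SetLike.mem_coe, AddMonoidHom.mem_ker, map_sub, hχsingle, hχsingle,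
          hvs, hvs, sub_self]
      · rw [SetLike.mem_coe, AddMonoidHom.mem_ker, map_sum]
        have : ∀ s : S, χ (Finsupp.single s (1 : ℤ)) = v s := by
          intro s; rw [hχsingle, one_smul]
        simp only [this]
        rw [Fintype.sum_sum_type]
        simp only [hv, Sum.elim_inl, Sum.elim_inr]
        rw [Finset.sum_const, Finset.card_univ, Fintype.card_fin,
          Finset.sum_const, Finset.card_univ, Fintype.card_unit, one_smul,
          nsmul_eq_mul]
        have : ((s₂ : ZMod n) * (e₀ : ZMod n) + 1) = ((s₂ * e₀ + 1 : ℕ) : ZMod n) := by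
          push_cast; ring
        rw [this]
        have : s₂ * e₀ + 1 = n := by rw [hn]; ring
        rw [this, ZMod.natCast_self]
    exact this hx
  set χbar : CompGrp e →+ ZMod n := QuotientAddGroup.lift (relSub e) χ hker with hχbar
  have hχbarz : χbar (Psi e z) = 1 := by
    rw [hPsi]
    show χ (Finsupp.single z 1) = 1
    rw [hχsingle, one_smul, hv, hzdef]
    rfl
  -- order
  have horder : addOrderOf (Psi e z) = n := by
    refine Nat.dvd_antisymm (addOrderOf_dvd_of_nsmul_eq_zero hnz) ?_
    have h4 : addOrderOf (χbar (Psi e z)) ∣ addOrderOf (Psi e z) :=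
      addOrderOf_map_dvd χbar (Psi e z)
    rwa [hχbarz, ZMod.addOrderOf_one] at h4
  -- card
  have hcard : Nat.card (CompGrp e) = n := by
    have := Nat.card_zmultiples (Psi e z)
    rw [htop] at this
    rw [← horder, ← this]
    exact (Nat.card_congr AddSubgroup.topEquiv.toEquiv).symm
  refine ⟨hcard, htop, horder, ?_, ?_⟩
  · intro 𝔰
    have h5 : Psi e z = -(s₂ • Psi e (Sum.inl 𝔰)) := by
      rw [key 𝔰, ← mul_nsmul', mul_comm, eq_neg_iff_add_eq_zero, add_comm, ← succ_nsmul,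
        ← hn]
      exact hnz
    refine ⟨key 𝔰, h5, ?_⟩
    rw [eq_top_iff, ← htop, AddSubgroup.zmultiples_le, h5]
    exact AddSubgroup.neg_mem _ (AddSubgroup.nsmul_mem _ (AddSubgroup.mem_zmultiples _) s₂)
  · intro τ hτ T hT
    have hτz : τ z = z := by
      have h6 := congrFun hτ z
      rcases h7 : τ z with i | u
      · rw [Function.comp_apply, h7] at h6
        simp [hedef, hzdef] at h6
        omega
      · cases u; rfl
    have hTz : T (Psi e z) = Psi e z := by rw [hT, hτz]
    refine AddMonoidHom.ext fun x => ?_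
    obtain ⟨k, rfl⟩ := AddSubgroup.mem_zmultiples_iff.mp (hgen x)
    rw [map_zsmul, hTz]
    rfl
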